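/- Let arc : [0,∞) → [1,∞) assign to a ≥ 0 the length of a circular arc lying above a chord of length 1 and enclosing area a between the arc and the chord. Then arc is strictly increasing, arc is convex on [0, π/8], and there exist η > 0 such that arc(a) ≥ 1 + η·a² for all a ∈ [0, η). -/

import Mathlib

open Real Set Filter Topology

section ArcAux

noncomputable def fA (θ : ℝ) : ℝ := (θ - Real.sin θ * Real.cos θ) / (4 * Real.sin θ ^ 2)
noncomputable def gL (θ : ℝ) : ℝ := θ / Real.sin θ

lemma key_pos {θ : ℝ} (h : θ ∈ Ioo 0 π) : 0 < Real.sin θ - θ * Real.cos θ := by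
  have hs : 0 < Real.sin θ := Real.sin_pos_of_pos_of_lt_pi h.1 h.2
  rcases le_or_gt (Real.cos θ) 0 with hc | hc
  · nlinarith [h.1]
  · have hθ : θ < π / 2 := by
      by_contra hle
      exact absurd (Real.cos_nonpos_of_pi_div_two_le_of_le (not_lt.1 hle)
        (by linarith [h.2, Real.pi_pos])) (not_le.2 hc)
    have := Real.lt_tan h.1 hθ
    rw [Real.tan_eq_sin_div_cos, lt_div_iff₀ hc] at this
    linarith

lemma hasDerivAt_fA {θ : ℝ} (h : θ ∈ Ioo 0 π) :
    HasDerivAt fA ((Real.sin θ - θ * Real.cos θ) / (2 * Real.sin θ ^ 3)) θ := by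
  have hs : Real.sin θ ≠ 0 := (Real.sin_pos_of_pos_of_lt_pi h.1 h.2).ne'
  have h1 : HasDerivAt (fun t : ℝ => t - Real.sin t * Real.cos t)
      (1 - (Real.cos θ * Real.cos θ + Real.sin θ * -Real.sin θ)) θ :=
    (hasDerivAt_id θ).sub ((Real.hasDerivAt_sin θ).mul (Real.hasDerivAt_cos θ))
  have h2 : HasDerivAt (fun t : ℝ => 4 * Real.sin t ^ 2)
      (4 * (2 * Real.sin θ ^ 1 * Real.cos θ)) θ :=
    ((Real.hasDerivAt_sin θ).pow 2).const_mul 4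
  have h3 := h1.div h2 (by positivity)
  refine h3.congr_deriv (Eq.symm ?_)
  have pyth := Real.sin_sq_add_cos_sq θ
  field_simp
  linear_combination (-(2:ℝ) * Real.sin θ) * pyth

lemma hasDerivAt_gL {θ : ℝ} (h : θ ∈ Ioo 0 π) :
    HasDerivAt gL ((Real.sin θ - θ * Real.cos θ) / Real.sin θ ^ 2) θ := by
  have hs : Real.sin θ ≠ 0 := (Real.sin_pos_of_pos_of_lt_pi h.1 h.2).ne'
  have := (hasDerivAt_id θ).div (Real.hasDerivAt_sin θ) hs
  refine this.congr_deriv (Eq.symm ?_)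
  field_simp
  simp only [id]; ring


lemma sin_ge_cubic {x : ℝ} (hx : 0 ≤ x) : x - x ^ 3 / 6 ≤ Real.sin x := by
  have H : MonotoneOn (fun x : ℝ => Real.sin x - x + x ^ 3 / 6) (Ici 0) := by
    apply monotoneOn_of_deriv_nonneg (convex_Ici 0)
    · exact (Continuous.continuousOn (by continuity))
    · apply Differentiable.differentiableOn
      exact (Real.differentiable_sin.sub differentiable_id).add (by fun_prop)
    · intro x hx
      have hd : HasDerivAt (fun x : ℝ => Real.sin x - x + x ^ 3 / 6)
          (Real.cos x - 1 + (3 * x ^ 2) / 6) x := by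
        have := ((Real.hasDerivAt_sin x).sub (hasDerivAt_id x)).add
          (((hasDerivAt_pow 3 x)).div_const 6)
        exact this.congr_deriv (by norm_num)
      rw [hd.deriv]
      rw [interior_Ici] at hx
      nlinarith [Real.one_sub_sq_div_two_le_cos (x := x)]
  have h0 : (0:ℝ) ∈ Ici (0:ℝ) := self_mem_Ici
  have := H h0 hx hx
  simp at this
  linarith

lemma sub_sin_ge {x : ℝ} (hx : x ∈ Icc 0 π) : 2 * x ^ 3 / (3 * π ^ 2) ≤ x - Real.sin x := by
  have hπ := Real.pi_pos
  have H : MonotoneOn (fun x : ℝ => x - Real.sin x - 2 * x ^ 3 / (3 * π ^ 2)) (Icc 0 π) := by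
    apply monotoneOn_of_deriv_nonneg (convex_Icc 0 π)
    · exact (Continuous.continuousOn (by continuity))
    · apply Differentiable.differentiableOn
      exact (differentiable_id.sub Real.differentiable_sin).sub (by fun_prop)
    · intro x hx'
      rw [interior_Icc] at hx'
      have hd : HasDerivAt (fun x : ℝ => x - Real.sin x - 2 * x ^ 3 / (3 * π ^ 2))
          (1 - Real.cos x - 2 * (3 * x ^ 2) / (3 * π ^ 2)) x := by
        have := ((hasDerivAt_id x).sub (Real.hasDerivAt_sin x)).sub
          ((((hasDerivAt_pow 3 x)).const_mul 2).div_const (3 * π ^ 2))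
        exact this.congr_deriv (by norm_num)
      rw [hd.deriv]
      have hc : Real.cos x ≤ 1 - 2 / π ^ 2 * x ^ 2 :=
        Real.cos_le_one_sub_mul_cos_sq (by rw [abs_of_nonneg hx'.1.le]; exact hx'.2.le)
      have : 2 * (3 * x ^ 2) / (3 * π ^ 2) = 2 / π ^ 2 * x ^ 2 := by field_simp
      rw [this]; linarith
  have h0 : (0:ℝ) ∈ Icc (0:ℝ) π := ⟨le_refl 0, hπ.le⟩
  have := H h0 hx hx.1
  simp at this
  linarith



lemma fA_zero : fA 0 = 0 := by simp [fA]

lemma fA_le {θ : ℝ} (h0 : 0 ≤ θ) (h2 : θ ≤ π / 2) : fA θ ≤ π ^ 2 / 24 * θ := by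
  have hπ := Real.pi_pos
  rcases eq_or_lt_of_le h0 with rfl | hθ
  · simp [fA]
  have hs : 2 / π * θ ≤ Real.sin θ := Real.mul_le_sin h0 h2
  have hspos : 0 < Real.sin θ := Real.sin_pos_of_pos_of_lt_pi hθ (by linarith)
  -- numerator bound : θ - sin θ cos θ = θ - sin (2θ)/2 ≤ (2θ)^3/12
  have h2θ : Real.sin θ * Real.cos θ = Real.sin (2 * θ) / 2 := by
    rw [Real.sin_two_mul]; ring
  have hnum : θ - Real.sin θ * Real.cos θ ≤ 2 * θ ^ 3 / 3 := by
    have := sin_ge_cubic (x := 2 * θ) (by linarith)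
    rw [h2θ]; nlinarith
  have hden : 4 * (2 / π * θ) ^ 2 ≤ 4 * Real.sin θ ^ 2 := by
    have := pow_le_pow_left₀ (by positivity : (0:ℝ) ≤ 2 / π * θ) hs 2
    linarith
  have hdenpos : (0:ℝ) < 4 * (2 / π * θ) ^ 2 := by positivity
  calc fA θ ≤ (2 * θ ^ 3 / 3) / (4 * (2 / π * θ) ^ 2) := by
        apply div_le_div₀ (by positivity) hnum hdenpos hden
    _ = π ^ 2 / 24 * θ := by field_simp; ring

lemma fA_lt_half {θ : ℝ} (h0 : 0 ≤ θ) (h2 : θ ≤ π / 2) : fA θ ≤ θ / 2 := by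
  have h := fA_le h0 h2
  have hπ : π ^ 2 < 12 := by nlinarith [Real.pi_lt_d2]
  nlinarith

lemma fA_pos {θ : ℝ} (h : θ ∈ Ioo 0 π) : 0 < fA θ := by
  have hs : 0 < Real.sin θ := Real.sin_pos_of_pos_of_lt_pi h.1 h.2
  have hsl : Real.sin θ < θ := Real.sin_lt h.1
  have hnum : 0 < θ - Real.sin θ * Real.cos θ := by
    rcases le_or_gt (Real.cos θ) 0 with hc | hc
    · nlinarith [h.1]
    · nlinarith [Real.cos_le_one θ]
  exact div_pos hnum (by positivity)

lemma fA_pi_div_two : fA (π / 2) = π / 8 := by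
  simp [fA]
  ring



lemma contOn_fA : ContinuousOn fA (Ico 0 π) := by
  intro x hx
  rcases eq_or_lt_of_le hx.1 with rfl | hpos
  · unfold ContinuousWithinAt
    rw [fA_zero]
    have hπ := Real.pi_pos
    have h1 : Tendsto (fun θ : ℝ => π ^ 2 / 24 * θ) (𝓝[Ico (0:ℝ) π] 0) (𝓝 0) := by
      have : Tendsto (fun θ : ℝ => π ^ 2 / 24 * θ) (𝓝 0) (𝓝 (π ^ 2 / 24 * 0)) :=
        (continuous_const.mul continuous_id).tendsto 0
      simpa using this.mono_left nhdsWithin_le_nhds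
    apply tendsto_of_tendsto_of_tendsto_of_le_of_le' tendsto_const_nhds h1
    · filter_upwards [self_mem_nhdsWithin] with θ hθ
      rcases eq_or_lt_of_le hθ.1 with rfl | hp
      · rw [fA_zero]
      · exact (fA_pos ⟨hp, hθ.2⟩).le
    · filter_upwards [self_mem_nhdsWithin,
        mem_nhdsWithin_of_mem_nhds (Iio_mem_nhds (by positivity : (0:ℝ) < π / 2))]
        with θ hθ hθ2
      exact fA_le hθ.1 hθ2.le
  · have hs : Real.sin x ≠ 0 := (Real.sin_pos_of_pos_of_lt_pi hpos hx.2).ne'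
    apply ContinuousAt.continuousWithinAt
    apply ContinuousAt.div (by fun_prop) (by fun_prop)
    positivity

lemma fA_mono : StrictMonoOn fA (Ico 0 π) := by
  apply strictMonoOn_of_deriv_pos (convex_Ico 0 π) contOn_fA
  intro x hx
  rw [interior_Ico] at hx
  rw [(hasDerivAt_fA hx).deriv]
  have hs : 0 < Real.sin x := Real.sin_pos_of_pos_of_lt_pi hx.1 hx.2
  exact div_pos (key_pos hx) (by positivity)

lemma gL_mono : StrictMonoOn gL (Ioo 0 π) := by
  apply strictMonoOn_of_deriv_pos (convex_Ioo 0 π)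
  · intro x hx
    have hs : Real.sin x ≠ 0 := (Real.sin_pos_of_pos_of_lt_pi hx.1 hx.2).ne'
    exact (ContinuousAt.div continuousAt_id (by fun_prop) hs).continuousWithinAt
  · intro x hx
    rw [interior_Ioo] at hx
    rw [(hasDerivAt_gL hx).deriv]
    have hs : 0 < Real.sin x := Real.sin_pos_of_pos_of_lt_pi hx.1 hx.2
    exact div_pos (key_pos hx) (by positivity)

lemma fA_surj {a : ℝ} (ha : 0 < a) : ∃ θ ∈ Ioo 0 π, fA θ = a := by
  have hπ := Real.pi_pos
  set θ₁ := min a (π / 4) with hθ₁def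
  have hθ₁pos : 0 < θ₁ := lt_min ha (by positivity)
  have hθ₁le : θ₁ ≤ π / 4 := min_le_right _ _
  have hfθ₁ : fA θ₁ < a := by
    have := fA_lt_half hθ₁pos.le (by linarith)
    have h2 : θ₁ ≤ a := min_le_left _ _
    linarith
  set δ := min (π / 4) (Real.sqrt (π / (16 * a))) with hδdef
  have hδpos : 0 < δ := lt_min (by positivity) (Real.sqrt_pos.2 (by positivity))
  have hδle : δ ≤ π / 4 := min_le_left _ _
  set θ₂ := π - δ with hθ₂def
  have hθ₂mem : θ₂ ∈ Ioo 0 π := ⟨by linarith, by linarith⟩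
  have hsin2 : Real.sin θ₂ = Real.sin δ := by rw [hθ₂def, Real.sin_pi_sub]
  have hsinle : Real.sin θ₂ ≤ δ := by
    rw [hsin2]; exact Real.sin_le hδpos.le
  have hsinpos : 0 < Real.sin θ₂ := Real.sin_pos_of_pos_of_lt_pi hθ₂mem.1 hθ₂mem.2
  have hδsq : δ ^ 2 ≤ π / (16 * a) := by
    have : δ ≤ Real.sqrt (π / (16 * a)) := min_le_right _ _
    have h2 := Real.sq_sqrt (by positivity : (0:ℝ) ≤ π / (16 * a))
    nlinarith
  have hcos : Real.cos θ₂ ≤ 0 := by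
    apply Real.cos_nonpos_of_pi_div_two_le_of_le <;> [skip; linarith] <;> linarith
  have hfθ₂ : a < fA θ₂ := by
    rw [fA, lt_div_iff₀ (by positivity)]
    have h1 : Real.sin θ₂ ^ 2 ≤ δ ^ 2 := by nlinarith
    have h2 : θ₂ ≥ π / 2 := by linarith
    have hδsq' : δ ^ 2 * (16 * a) ≤ π := (le_div_iff₀ (by positivity)).1 hδsq
    nlinarith [mul_nonneg hsinpos.le (neg_nonneg.2 hcos),
      mul_le_mul_of_nonneg_left h1 ha.le]
  have hle : θ₁ ≤ θ₂ := by linarith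
  have hsub : Icc θ₁ θ₂ ⊆ Ico 0 π := fun t ht => ⟨by linarith [ht.1], by linarith [ht.2, hδpos]⟩
  have hiv := intermediate_value_Icc hle (contOn_fA.mono hsub)
  have : a ∈ Icc (fA θ₁) (fA θ₂) := ⟨hfθ₁.le, hfθ₂.le⟩
  obtain ⟨θ, hθmem, hθeq⟩ := hiv this
  exact ⟨θ, ⟨lt_of_lt_of_le hθ₁pos hθmem.1, lt_of_le_of_lt hθmem.2 (by linarith)⟩, hθeq⟩


noncomputable def G (θ : ℝ) : ℝ := if θ = 0 then 1 else θ / Real.sin θ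

lemma G_zero : G 0 = 1 := by simp [G]

lemma G_eq_gL {θ : ℝ} (h : θ ≠ 0) : G θ = gL θ := by simp [G, h, gL]

lemma hasDerivAt_G {θ : ℝ} (h : θ ∈ Ioo 0 π) :
    HasDerivAt G ((Real.sin θ - θ * Real.cos θ) / Real.sin θ ^ 2) θ := by
  apply (hasDerivAt_gL h).congr_of_eventuallyEq
  filter_upwards [eventually_ne_nhds h.1.ne'] with y hy
  exact G_eq_gL hy

lemma contAt_fA {θ : ℝ} (h : θ ∈ Ioo 0 π) : ContinuousAt fA θ :=
  (hasDerivAt_fA h).continuousAt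

lemma tendsto_fA_zero : Tendsto fA (𝓝[>] (0:ℝ)) (𝓝 0) := by
  have hπ := Real.pi_pos
  have h1 : Tendsto (fun θ : ℝ => π ^ 2 / 24 * θ) (𝓝[>] (0:ℝ)) (𝓝 0) := by
    have : Tendsto (fun θ : ℝ => π ^ 2 / 24 * θ) (𝓝 0) (𝓝 (π ^ 2 / 24 * 0)) :=
      (continuous_const.mul continuous_id).tendsto 0
    simpa using this.mono_left nhdsWithin_le_nhds
  apply tendsto_of_tendsto_of_tendsto_of_le_of_le' tendsto_const_nhds h1
  · filter_upwards [self_mem_nhdsWithin,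
      mem_nhdsWithin_of_mem_nhds (Iio_mem_nhds (by positivity : (0:ℝ) < π / 2))] with θ h1 h2
    exact (fA_pos ⟨h1, lt_trans (mem_Iio.1 h2) (by linarith)⟩).le
  · filter_upwards [self_mem_nhdsWithin,
      mem_nhdsWithin_of_mem_nhds (Iio_mem_nhds (by positivity : (0:ℝ) < π / 2))] with θ h1 h2
    exact fA_le (le_of_lt h1) h2.le

lemma tendsto_G_zero : Tendsto G (𝓝[>] (0:ℝ)) (𝓝 1) := by
  have hslope : Tendsto (fun y : ℝ => Real.sin y / y) (𝓝[≠] (0:ℝ)) (𝓝 1) := by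
    have := hasDerivAt_iff_tendsto_slope.1 (Real.hasDerivAt_sin 0)
    simp only [Real.sin_zero, Real.cos_zero, slope_def_field] at this
    refine this.congr fun y => ?_
    rw [slope_def_field]
    simp
  have hinv : Tendsto (fun y : ℝ => (Real.sin y / y)⁻¹) (𝓝[≠] (0:ℝ)) (𝓝 1) := by
    simpa using hslope.inv₀ one_ne_zero
  have hmono : 𝓝[>] (0:ℝ) ≤ 𝓝[≠] (0:ℝ) :=
    nhdsWithin_mono 0 fun x hx => ne_of_gt hx
  apply (hinv.mono_left hmono).congr'
  filter_upwards [self_mem_nhdsWithin] with y hy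
  rw [inv_div, G_eq_gL (ne_of_gt hy), gL]

lemma slope_eq {θ₁ θ₂ : ℝ} (h1 : 0 ≤ θ₁) (h12 : θ₁ < θ₂) (h2 : θ₂ < π) :
    ∃ c ∈ Ioo θ₁ θ₂, G θ₂ - G θ₁ = 2 * Real.sin c * (fA θ₂ - fA θ₁) := by
  have hsub : Ioo θ₁ θ₂ ⊆ Ioo 0 π := fun x hx => ⟨lt_of_le_of_lt h1 hx.1, lt_trans hx.2 h2⟩
  have hdf : DifferentiableOn ℝ fA (Ioo θ₁ θ₂) := fun x hx =>
    (hasDerivAt_fA (hsub hx)).differentiableAt.differentiableWithinAt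
  have hdg : DifferentiableOn ℝ G (Ioo θ₁ θ₂) := fun x hx =>
    (hasDerivAt_G (hsub hx)).differentiableAt.differentiableWithinAt
  have hmem2 : θ₂ ∈ Ioo 0 π := ⟨lt_of_le_of_lt h1 h12, h2⟩
  have hfb : Tendsto fA (𝓝[<] θ₂) (𝓝 (fA θ₂)) :=
    (contAt_fA hmem2).continuousWithinAt
  have hgb : Tendsto G (𝓝[<] θ₂) (𝓝 (G θ₂)) :=
    (hasDerivAt_G hmem2).continuousAt.continuousWithinAt
  have hfa : Tendsto fA (𝓝[>] θ₁) (𝓝 (fA θ₁)) := by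
    rcases eq_or_lt_of_le h1 with rfl | hpos
    · rw [fA_zero]; exact tendsto_fA_zero
    · exact (contAt_fA ⟨hpos, lt_trans h12 h2⟩).continuousWithinAt
  have hga : Tendsto G (𝓝[>] θ₁) (𝓝 (G θ₁)) := by
    rcases eq_or_lt_of_le h1 with rfl | hpos
    · rw [G_zero]; exact tendsto_G_zero
    · exact (hasDerivAt_G ⟨hpos, lt_trans h12 h2⟩).continuousAt.continuousWithinAt
  obtain ⟨c, hc, heq⟩ :=
    exists_ratio_deriv_eq_ratio_slope' (f := fA) (g := G) (hab := h12) hdf hdg hfa hga hfb hgb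
  refine ⟨c, hc, ?_⟩
  have hcmem : c ∈ Ioo 0 π := hsub hc
  have hs : 0 < Real.sin c := Real.sin_pos_of_pos_of_lt_pi hcmem.1 hcmem.2
  rw [(hasDerivAt_fA hcmem).deriv, (hasDerivAt_G hcmem).deriv] at heq
  have hD : (0:ℝ) < (Real.sin c - c * Real.cos c) / (2 * Real.sin c ^ 3) :=
    div_pos (key_pos hcmem) (by positivity)
  have hrel : (Real.sin c - c * Real.cos c) / Real.sin c ^ 2 =
      2 * Real.sin c * ((Real.sin c - c * Real.cos c) / (2 * Real.sin c ^ 3)) := by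
    field_simp
  rw [hrel] at heq
  apply mul_right_cancel₀ (ne_of_gt hD)
  exact heq.trans (by ring)


/-- `arc : [0,∞) → [1,∞)` is the length of the circular arc lying above a chord of
length 1 and enclosing area `a` with the chord.  It is characterized by elementary
circle geometry: the arc subtending a half-angle `θ ∈ (0,π)` at the center has radius
`1/(2 sin θ)`, length `θ / sin θ` and encloses area `(θ − sin θ cos θ)/(4 sin² θ)`.
Then `arc` is strictly increasing on `[0,∞)`, convex on `[0, π/8]`, and there is
`η > 0` with `arc a ≥ 1 + η a²` for `a ∈ [0, η)`. -/
theorem arc_strictMono_convex_quadratic_lower_bound (arc : ℝ → ℝ)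
    (h0 : arc 0 = 1)
    (hchar : ∀ θ ∈ Set.Ioo (0 : ℝ) π,
      arc ((θ - Real.sin θ * Real.cos θ) / (4 * Real.sin θ ^ 2)) = θ / Real.sin θ) :
    StrictMonoOn arc (Set.Ici 0) ∧ ConvexOn ℝ (Set.Icc 0 (π / 8)) arc ∧
      ∃ η > 0, ∀ a ∈ Set.Ico (0 : ℝ) η, arc a ≥ 1 + η * a ^ 2 := by
  have hπ := Real.pi_pos
  have harc : ∀ θ ∈ Ioo (0:ℝ) π, arc (fA θ) = gL θ := fun θ hθ => hchar θ hθ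
  have harcG : ∀ θ ∈ Icc (0:ℝ) (π/2), arc (fA θ) = G θ := by
    intro θ hθ
    rcases eq_or_lt_of_le hθ.1 with rfl | hp
    · rw [fA_zero, G_zero, h0]
    · rw [G_eq_gL hp.ne']; exact harc θ ⟨hp, by linarith [hθ.2]⟩
  refine ⟨?_, ?_, ?_⟩
  · -- strict monotonicity
    intro a ha b hb hab
    obtain ⟨θb, hθb, hfb⟩ := fA_surj (lt_of_le_of_lt ha hab)
    have hsb : 0 < Real.sin θb := Real.sin_pos_of_pos_of_lt_pi hθb.1 hθb.2
    have harcb : arc b = gL θb := by rw [← hfb]; exact harc θb hθb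
    rcases eq_or_lt_of_le (show (0:ℝ) ≤ a from ha) with rfl | hapos
    · rw [h0, harcb, gL, lt_div_iff₀ hsb, one_mul]
      exact Real.sin_lt hθb.1
    · obtain ⟨θa, hθa, hfa⟩ := fA_surj hapos
      have hlt : θa < θb := by
        by_contra hle
        have := fA_mono.monotoneOn ⟨hθb.1.le, hθb.2⟩ ⟨hθa.1.le, hθa.2⟩ (not_lt.1 hle)
        rw [hfa, hfb] at this; linarith
      have harca : arc a = gL θa := by rw [← hfa]; exact harc θa hθa
      rw [harca, harcb]
      exact gL_mono hθa hθb hlt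
  · -- convexity
    apply convexOn_of_slope_mono_adjacent (convex_Icc 0 (π/8))
    intro x y z hx hz hxy hyz
    have hsurj : ∀ a ∈ Icc (0:ℝ) (π/8), ∃ θ ∈ Icc (0:ℝ) (π/2), fA θ = a := by
      intro a ha
      have hcont : ContinuousOn fA (Icc 0 (π/2)) :=
        contOn_fA.mono (fun t ht => ⟨ht.1, lt_of_le_of_lt ht.2 (by linarith)⟩)
      have hiv := intermediate_value_Icc (by positivity : (0:ℝ) ≤ π/2) hcont
      rw [fA_zero, fA_pi_div_two] at hiv
      obtain ⟨θ, hθ, hθeq⟩ := hiv ha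
      exact ⟨θ, hθ, hθeq⟩
    have hy : y ∈ Icc (0:ℝ) (π/8) := ⟨le_trans hx.1 hxy.le, le_trans hyz.le hz.2⟩
    obtain ⟨θx, hθx, hfx⟩ := hsurj x hx
    obtain ⟨θy, hθy, hfy⟩ := hsurj y hy
    obtain ⟨θz, hθz, hfz⟩ := hsurj z hz
    have hmm : ∀ {θ : ℝ}, θ ∈ Icc (0:ℝ) (π/2) → θ ∈ Ico (0:ℝ) π :=
      fun h => ⟨h.1, lt_of_le_of_lt h.2 (by linarith)⟩
    have hxy' : θx < θy := by
      by_contra hle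
      have := fA_mono.monotoneOn (hmm hθy) (hmm hθx) (not_lt.1 hle)
      rw [hfx, hfy] at this; linarith
    have hyz' : θy < θz := by
      by_contra hle
      have := fA_mono.monotoneOn (hmm hθz) (hmm hθy) (not_lt.1 hle)
      rw [hfy, hfz] at this; linarith
    obtain ⟨c₁, hc₁, he₁⟩ := slope_eq hθx.1 hxy' (lt_of_le_of_lt hθy.2 (by linarith))
    obtain ⟨c₂, hc₂, he₂⟩ := slope_eq hθy.1 hyz' (lt_of_le_of_lt hθz.2 (by linarith))
    have e1 : arc y - arc x = 2 * Real.sin c₁ * (y - x) := by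
      calc arc y - arc x = G θy - G θx := by
            rw [← hfx, ← hfy, harcG _ hθx, harcG _ hθy]
        _ = 2 * Real.sin c₁ * (fA θy - fA θx) := he₁
        _ = 2 * Real.sin c₁ * (y - x) := by rw [hfx, hfy]
    have e2 : arc z - arc y = 2 * Real.sin c₂ * (z - y) := by
      calc arc z - arc y = G θz - G θy := by
            rw [← hfy, ← hfz, harcG _ hθy, harcG _ hθz]
        _ = 2 * Real.sin c₂ * (fA θz - fA θy) := he₂
        _ = 2 * Real.sin c₂ * (z - y) := by rw [hfy, hfz]
    rw [e1, e2, mul_div_assoc, mul_div_assoc,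
      div_self (ne_of_gt (sub_pos.2 hxy)), div_self (ne_of_gt (sub_pos.2 hyz)),
      mul_one, mul_one]
    have hsin : Real.sin c₁ < Real.sin c₂ := by
      have h1 := hc₁.1; have h2 := hc₁.2; have h3 := hc₂.1; have h4 := hc₂.2
      have k1 := hθx.1; have k2 := hθy.2; have k3 := hθz.2
      exact Real.strictMonoOn_sin ⟨by linarith, by linarith⟩
        ⟨by linarith [hθy.1], by linarith⟩ (by linarith)
    linarith
  · -- quadratic lower bound
    refine ⟨1/5, by norm_num, ?_⟩
    intro a ha
    rcases eq_or_lt_of_le ha.1 with rfl | hapos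
    · rw [h0]; norm_num
    obtain ⟨θ, hθ, hfθ⟩ := fA_surj hapos
    have hθlt : θ < π/2 := by
      by_contra hle
      have h8 : fA (π/2) ≤ fA θ :=
        fA_mono.monotoneOn ⟨by positivity, by linarith⟩ ⟨hθ.1.le, hθ.2⟩ (not_lt.1 hle)
      rw [fA_pi_div_two, hfθ] at h8
      have : π/8 < 1/5 := lt_of_le_of_lt h8 ha.2
      nlinarith [Real.pi_gt_three]
    have hs : 0 < Real.sin θ := Real.sin_pos_of_pos_of_lt_pi hθ.1 hθ.2
    have harca : arc a = θ / Real.sin θ := by rw [← hfθ]; exact harc θ hθ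
    rw [ge_iff_le, harca, ← sub_nonneg]
    have hsle : Real.sin θ ≤ θ := (Real.sin_lt hθ.1).le
    have hkey := sub_sin_ge ⟨hθ.1.le, hθ.2.le⟩
    have hkey' : 2 * θ ^ 3 ≤ (θ - Real.sin θ) * (3 * π ^ 2) := by
      have := (div_le_iff₀ (by positivity : (0:ℝ) < 3 * π ^ 2)).1 hkey; linarith
    have hπ2 : π ^ 2 ≤ 40/3 := by nlinarith [Real.pi_lt_d2]
    have ha2 : a ≤ θ/2 := by rw [← hfθ]; exact fA_lt_half hθ.1.le hθlt.le
    have hasq : a ^ 2 ≤ θ ^ 2 / 4 := by nlinarith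
    rw [sub_nonneg, ← sub_nonneg]
    have hgoal : (1 + 1/5 * a ^ 2) * Real.sin θ ≤ θ := by
      nlinarith [mul_nonneg (sub_nonneg.2 hasq) hs.le,
        mul_nonneg (sub_nonneg.2 hsle) (sq_nonneg θ),
        mul_nonneg (sub_nonneg.2 hsle) (sub_nonneg.2 hπ2)]
    rw [sub_nonneg, le_div_iff₀ hs]
    linarith
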